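/- For a twice continuously differentiable (b−a)-periodic function u and an even kernel γ ≥ 0 on (−δ,δ) with ∫_{−δ}^δ s²γ(s) ds = 1 and ∫_{−δ}^δ s⁴γ(s) ds < ∞, the nonlocal operator satisfies |−2∫_0^δ (u(x+s) − 2u(x) + u(x−s)) γ(s) ds + u''(x)| ≤ (1/12) ‖u''''‖_∞ ∫_{−δ}^δ s⁴γ(s) ds for all x, provided u is C⁴. -/

import Mathlib

open MeasureTheory intervalIntegral

private lemma ftc_bound {f f' g : ℝ → ℝ} {s : ℝ} (hs : 0 ≤ s)
    (hf : ∀ t, HasDerivAt f (f' t) t) (hf0 : f 0 = 0)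
    (hc : Continuous f') (hg : Continuous g)
    (hb : ∀ t ∈ Set.Icc (0:ℝ) s, |f' t| ≤ g t) :
    |f s| ≤ ∫ t in (0:ℝ)..s, g t := by
  have hint : IntervalIntegrable f' volume 0 s := hc.intervalIntegrable _ _
  have heq : ∫ t in (0:ℝ)..s, f' t = f s - f 0 :=
    intervalIntegral.integral_eq_sub_of_hasDerivAt (fun t _ => hf t) hint
  rw [hf0, sub_zero] at heq
  rw [← heq]
  calc |∫ t in (0:ℝ)..s, f' t| ≤ ∫ t in (0:ℝ)..s, |f' t| :=
        by simpa only [Real.norm_eq_abs] using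
          intervalIntegral.norm_integral_le_integral_norm (μ := volume) (f := f') hs
    _ ≤ ∫ t in (0:ℝ)..s, g t :=
        intervalIntegral.integral_mono_on hs (hc.abs.intervalIntegrable _ _)
          (hg.intervalIntegrable _ _) hb

private lemma taylor4 {u : ℝ → ℝ} {M : ℝ} (huC4 : ContDiff ℝ 4 u)
    (hM : ∀ y, |iteratedDeriv 4 u y| ≤ M) (x : ℝ) {s : ℝ} (hs : 0 ≤ s) :
    |u (x + s) - 2 * u x + u (x - s) - s ^ 2 * iteratedDeriv 2 u x|
      ≤ M / 12 * s ^ 4 := by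
  have hM0 : 0 ≤ M := (abs_nonneg _).trans (hM 0)
  have hd : ∀ k : ℕ, k < 4 → ∀ y : ℝ,
      HasDerivAt (iteratedDeriv k u) (iteratedDeriv (k + 1) u y) y := by
    intro k hk y
    have hdiff := (huC4.differentiable_iteratedDeriv k (by exact_mod_cast hk)).differentiableAt
      (x := y)
    simpa [iteratedDeriv_succ] using hdiff.hasDerivAt
  have hcont : ∀ k : ℕ, k ≤ 4 → Continuous (iteratedDeriv k u) := fun k hk =>
    huC4.continuous_iteratedDeriv k (by exact_mod_cast hk)
  -- derivatives of t ↦ iteratedDeriv k u (x ± t)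
  have hp : ∀ k : ℕ, k < 4 → ∀ t : ℝ,
      HasDerivAt (fun t => iteratedDeriv k u (x + t)) (iteratedDeriv (k + 1) u (x + t)) t := by
    intro k hk t
    have := (hd k hk (x + t)).comp t ((hasDerivAt_id t).const_add x)
    simpa [Function.comp_def] using this
  have hm : ∀ k : ℕ, k < 4 → ∀ t : ℝ,
      HasDerivAt (fun t => iteratedDeriv k u (x - t)) (-iteratedDeriv (k + 1) u (x - t)) t := by
    intro k hk t
    have := (hd k hk (x - t)).comp t ((hasDerivAt_id t).neg.const_add x)
    simpa [Function.comp_def, mul_neg_one] using this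
  -- step 3
  have hb3 : ∀ t : ℝ, 0 ≤ t →
      |iteratedDeriv 3 u (x + t) - iteratedDeriv 3 u (x - t)| ≤ 2 * M * t := by
    intro t ht
    have hder : ∀ τ : ℝ, HasDerivAt (fun τ => iteratedDeriv 3 u (x + τ) - iteratedDeriv 3 u (x - τ))
        (iteratedDeriv 4 u (x + τ) + iteratedDeriv 4 u (x - τ)) τ := by
      intro τ
      have := (hp 3 (by norm_num) τ).sub (hm 3 (by norm_num) τ)
      exact this.congr_deriv (by ring)
    have hb := ftc_bound (g := fun _ => 2 * M) ht hder (by simp)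
      (((hcont 4 le_rfl).comp (continuous_const.add continuous_id)).add
        ((hcont 4 le_rfl).comp (continuous_const.sub continuous_id)))
      continuous_const
      (fun τ _ => by
        have h1 := hM (x + τ); have h2 := hM (x - τ)
        have := abs_add_le (iteratedDeriv 4 u (x + τ)) (iteratedDeriv 4 u (x - τ))
        linarith)
    calc |iteratedDeriv 3 u (x + t) - iteratedDeriv 3 u (x - t)|
        ≤ ∫ τ in (0:ℝ)..t, 2 * M := hb
      _ = 2 * M * t := by rw [intervalIntegral.integral_const, smul_eq_mul]; ring
  -- step 2
  have hb2 : ∀ t : ℝ, 0 ≤ t →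
      |iteratedDeriv 2 u (x + t) + iteratedDeriv 2 u (x - t) - 2 * iteratedDeriv 2 u x|
        ≤ M * t ^ 2 := by
    intro t ht
    have hder : ∀ τ : ℝ, HasDerivAt
        (fun τ => iteratedDeriv 2 u (x + τ) + iteratedDeriv 2 u (x - τ) - 2 * iteratedDeriv 2 u x)
        (iteratedDeriv 3 u (x + τ) - iteratedDeriv 3 u (x - τ)) τ := by
      intro τ
      have := ((hp 2 (by norm_num) τ).add (hm 2 (by norm_num) τ)).sub_const
        (2 * iteratedDeriv 2 u x)
      exact this.congr_deriv (by ring)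
    have hb := ftc_bound (g := fun τ => 2 * M * τ) ht hder (by simp; ring)
      (((hcont 3 (by norm_num)).comp (continuous_const.add continuous_id)).sub
        ((hcont 3 (by norm_num)).comp (continuous_const.sub continuous_id)))
      (by fun_prop)
      (fun τ hτ => hb3 τ hτ.1)
    calc |iteratedDeriv 2 u (x + t) + iteratedDeriv 2 u (x - t) - 2 * iteratedDeriv 2 u x|
        ≤ ∫ τ in (0:ℝ)..t, 2 * M * τ := hb
      _ = M * t ^ 2 := by rw [intervalIntegral.integral_const_mul, integral_id]; ring
  -- step 1
  have hb1 : ∀ t : ℝ, 0 ≤ t →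
      |deriv u (x + t) - deriv u (x - t) - 2 * t * iteratedDeriv 2 u x| ≤ M * t ^ 3 / 3 := by
    intro t ht
    have hder : ∀ τ : ℝ, HasDerivAt
        (fun τ => deriv u (x + τ) - deriv u (x - τ) - 2 * τ * iteratedDeriv 2 u x)
        (iteratedDeriv 2 u (x + τ) + iteratedDeriv 2 u (x - τ) - 2 * iteratedDeriv 2 u x) τ := by
      intro τ
      have hlin : HasDerivAt (fun τ : ℝ => 2 * τ * iteratedDeriv 2 u x)
          (2 * iteratedDeriv 2 u x) τ := by
        simpa using ((hasDerivAt_id τ).const_mul 2).mul_const (iteratedDeriv 2 u x)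
      have hp1 : HasDerivAt (fun τ => deriv u (x + τ)) (iteratedDeriv 2 u (x + τ)) τ := by
        have := hp 1 (by norm_num) τ
        simp only [iteratedDeriv_one] at this ⊢
        exact this
      have hm1 : HasDerivAt (fun τ => deriv u (x - τ)) (-iteratedDeriv 2 u (x - τ)) τ := by
        have := hm 1 (by norm_num) τ
        simp only [iteratedDeriv_one] at this ⊢
        exact this
      have := (hp1.sub hm1).sub hlin
      exact this.congr_deriv (by ring)
    have hb := ftc_bound (g := fun τ => M * τ ^ 2) ht hder (by simp)
      ((((hcont 2 (by norm_num)).comp (continuous_const.add continuous_id)).add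
        ((hcont 2 (by norm_num)).comp (continuous_const.sub continuous_id))).sub continuous_const)
      (by fun_prop)
      (fun τ hτ => hb2 τ hτ.1)
    calc |deriv u (x + t) - deriv u (x - t) - 2 * t * iteratedDeriv 2 u x|
        ≤ ∫ τ in (0:ℝ)..t, M * τ ^ 2 := hb
      _ = M * t ^ 3 / 3 := by rw [intervalIntegral.integral_const_mul, integral_pow]; ring
  -- step 0
  have hder0 : ∀ τ : ℝ, HasDerivAt
      (fun τ => u (x + τ) - 2 * u x + u (x - τ) - τ ^ 2 * iteratedDeriv 2 u x)
      (deriv u (x + τ) - deriv u (x - τ) - 2 * τ * iteratedDeriv 2 u x) τ := by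
    intro τ
    have hp0 : HasDerivAt (fun τ => u (x + τ)) (deriv u (x + τ)) τ := by
      have := hp 0 (by norm_num) τ
      simp only [iteratedDeriv_zero, zero_add, iteratedDeriv_one] at this
      exact this
    have hm0 : HasDerivAt (fun τ => u (x - τ)) (-deriv u (x - τ)) τ := by
      have := hm 0 (by norm_num) τ
      simp only [iteratedDeriv_zero, zero_add, iteratedDeriv_one] at this
      exact this
    have hsq : HasDerivAt (fun τ : ℝ => τ ^ 2 * iteratedDeriv 2 u x)
        (2 * τ * iteratedDeriv 2 u x) τ := by
      have := (hasDerivAt_pow 2 τ).mul_const (iteratedDeriv 2 u x)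
      simpa [mul_comm, mul_assoc, mul_left_comm] using this
    have := ((hp0.sub_const (2 * u x)).add hm0).sub hsq
    exact this.congr_deriv (by ring)
  have hb0 := ftc_bound (g := fun τ => M * τ ^ 3 / 3) hs hder0 (by simp; ring)
    (by
      have c1 : Continuous (deriv u) := by
        have := hcont 1 (by norm_num)
        rwa [iteratedDeriv_one] at this
      fun_prop)
    (by fun_prop)
    (fun τ hτ => hb1 τ hτ.1)
  calc |u (x + s) - 2 * u x + u (x - s) - s ^ 2 * iteratedDeriv 2 u x|
      ≤ ∫ τ in (0:ℝ)..s, M * τ ^ 3 / 3 := hb0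
    _ = M / 12 * s ^ 4 := by
        have hfe : (fun τ : ℝ => M * τ ^ 3 / 3) = fun τ : ℝ => (M / 3) * τ ^ 3 := by
          funext τ; ring
        rw [hfe, intervalIntegral.integral_const_mul, integral_pow]
        ring

theorem stmt14 (a b δ M : ℝ) (hab : a < b) (hδ : 0 < δ)
    (u γ : ℝ → ℝ)
    (hu : Function.Periodic u (b - a)) (huC4 : ContDiff ℝ 4 u)
    (hγeven : ∀ s, γ (-s) = γ s)
    (hγpos : ∀ s ∈ Set.Ioo (-δ) δ, 0 ≤ γ s)
    (hnorm : (∫ s in (-δ)..δ, s ^ 2 * γ s) = 1)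
    (hfourth : IntervalIntegrable (fun s => s ^ 4 * γ s) volume (-δ) δ)
    (hM : ∀ y, |iteratedDeriv 4 u y| ≤ M) :
    ∀ x : ℝ,
      |(-2) * (∫ s in (0:ℝ)..δ, (u (x + s) - 2 * u x + u (x - s)) * γ s)
          + iteratedDeriv 2 u x|
        ≤ (1 / 12) * M * ∫ s in (-δ)..δ, s ^ 4 * γ s := by
  intro x
  have hM0 : 0 ≤ M := (abs_nonneg _).trans (hM 0)
  have hsub1 : Set.uIcc (0:ℝ) δ ⊆ Set.uIcc (-δ) δ :=
    Set.uIcc_subset_uIcc (by rw [Set.mem_uIcc]; left; constructor <;> linarith)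
      (by rw [Set.mem_uIcc]; left; constructor <;> linarith)
  have hsub2 : Set.uIcc (-δ) (0:ℝ) ⊆ Set.uIcc (-δ) δ :=
    Set.uIcc_subset_uIcc (by rw [Set.mem_uIcc]; left; constructor <;> linarith)
      (by rw [Set.mem_uIcc]; left; constructor <;> linarith)
  -- integrability of s^2 γ
  have hg2int : IntervalIntegrable (fun s => s ^ 2 * γ s) volume (-δ) δ := by
    by_contra h
    rw [intervalIntegral.integral_undef h] at hnorm
    norm_num at hnorm
  -- even splitting
  have even_split : ∀ f : ℝ → ℝ, (∀ s, f (-s) = f s) →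
      IntervalIntegrable f volume (-δ) δ →
      (∫ s in (-δ)..δ, f s) = 2 * ∫ s in (0:ℝ)..δ, f s := by
    intro f hf hfi
    have h1 : IntervalIntegrable f volume (-δ) 0 := hfi.mono_set hsub2
    have h2 : IntervalIntegrable f volume 0 δ := hfi.mono_set hsub1
    have hadd := intervalIntegral.integral_add_adjacent_intervals h1 h2
    have hneg := intervalIntegral.integral_comp_neg (a := (0:ℝ)) (b := δ) f
    simp only [hf, neg_zero] at hneg
    linarith [hadd, hneg]
  have hI2 : (∫ s in (0:ℝ)..δ, s ^ 2 * γ s) = 1 / 2 := by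
    have := even_split (fun s => s ^ 2 * γ s) (fun s => by simp only [hγeven]; ring) hg2int
    rw [hnorm] at this
    linarith
  have hI4 : (∫ s in (-δ)..δ, s ^ 4 * γ s) = 2 * ∫ s in (0:ℝ)..δ, s ^ 4 * γ s :=
    even_split (fun s => s ^ 4 * γ s) (fun s => by simp only [hγeven]; ring) hfourth
  -- measurability of γ on Ioc 0 δ
  have hg4Ioc : IntegrableOn (fun s => s ^ 4 * γ s) (Set.Ioc 0 δ) volume :=
    (hfourth.mono_set hsub1).1
  have hne : ∀ᵐ s : ℝ ∂(volume : Measure ℝ), s ≠ δ := by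
    rw [MeasureTheory.ae_iff]
    have hset : {s : ℝ | ¬ s ≠ δ} = {δ} := by ext s; simp
    rw [hset]
    exact measure_singleton δ
  have hγmeas : AEStronglyMeasurable γ (volume.restrict (Set.Ioc 0 δ)) := by
    have h1 := hg4Ioc.aestronglyMeasurable
    have hm4 : Measurable fun s : ℝ => (s ^ 4)⁻¹ := (measurable_id.pow_const 4).inv
    have h2 : ∀ᵐ s ∂volume.restrict (Set.Ioc 0 δ), (s ^ 4)⁻¹ * (s ^ 4 * γ s) = γ s := by
      filter_upwards [ae_restrict_mem measurableSet_Ioc] with s hs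
      rw [← mul_assoc, inv_mul_cancel₀ (pow_ne_zero _ (ne_of_gt hs.1)), one_mul]
    exact (hm4.aestronglyMeasurable.mul h1).congr h2
  -- the remainder function
  have hcu : Continuous u := huC4.continuous
  have htay : ∀ s : ℝ, 0 ≤ s →
      |u (x + s) - 2 * u x + u (x - s) - s ^ 2 * iteratedDeriv 2 u x| ≤ M / 12 * s ^ 4 :=
    fun s hs => taylor4 huC4 hM x hs
  have hRcont : Continuous (fun s => u (x + s) - 2 * u x + u (x - s)
      - s ^ 2 * iteratedDeriv 2 u x) := by fun_prop
  -- integrability of remainder * γ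
  have hRγint : IntervalIntegrable
      (fun s => (u (x + s) - 2 * u x + u (x - s) - s ^ 2 * iteratedDeriv 2 u x) * γ s)
      volume 0 δ := by
    rw [intervalIntegrable_iff_integrableOn_Ioc_of_le hδ.le]
    apply Integrable.mono (g := fun s => M / 12 * (s ^ 4 * γ s))
      (hg4Ioc.const_mul (M / 12)) (hRcont.aestronglyMeasurable.mul hγmeas)
    filter_upwards [ae_restrict_mem measurableSet_Ioc] with s hs
    simp only [Pi.mul_apply, Real.norm_eq_abs, abs_mul]
    have h1 : |M / 12| = M / 12 := abs_of_nonneg (by positivity)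
    have h2 : |s ^ 4| = s ^ 4 := abs_of_nonneg (by positivity)
    rw [h1, h2, ← mul_assoc]
    exact mul_le_mul_of_nonneg_right (htay s hs.1.le) (abs_nonneg _)
  have hg2int0 : IntervalIntegrable (fun s => s ^ 2 * γ s) volume 0 δ := hg2int.mono_set hsub1
  have hg4int0 : IntervalIntegrable (fun s => s ^ 4 * γ s) volume 0 δ := hfourth.mono_set hsub1
  -- split the integral
  have hsplit : (∫ s in (0:ℝ)..δ, (u (x + s) - 2 * u x + u (x - s)) * γ s)
      = iteratedDeriv 2 u x * (∫ s in (0:ℝ)..δ, s ^ 2 * γ s)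
        + ∫ s in (0:ℝ)..δ, (u (x + s) - 2 * u x + u (x - s)
            - s ^ 2 * iteratedDeriv 2 u x) * γ s := by
    rw [← intervalIntegral.integral_const_mul,
      ← intervalIntegral.integral_add (hg2int0.const_mul _) hRγint]
    congr 1
    funext s
    ring
  -- bound the remainder integral
  have h4nonneg : 0 ≤ ∫ s in (0:ℝ)..δ, s ^ 4 * γ s := by
    apply intervalIntegral.integral_nonneg_of_ae_restrict hδ.le
    rw [Filter.EventuallyLE, ae_restrict_iff' measurableSet_Icc]
    filter_upwards [hne] with s hsne hs
    exact mul_nonneg (by positivity)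
      (hγpos s ⟨by linarith [hs.1], lt_of_le_of_ne hs.2 hsne⟩)
  have hJ : |∫ s in (0:ℝ)..δ, (u (x + s) - 2 * u x + u (x - s)
        - s ^ 2 * iteratedDeriv 2 u x) * γ s|
      ≤ M / 12 * ∫ s in (0:ℝ)..δ, s ^ 4 * γ s := by
    have hb := intervalIntegral.norm_integral_le_of_norm_le (μ := volume) (a := 0) (b := δ)
      (f := fun s => (u (x + s) - 2 * u x + u (x - s) - s ^ 2 * iteratedDeriv 2 u x) * γ s)
      (g := fun s => M / 12 * (s ^ 4 * γ s)) hδ.le ?_ (hg4int0.const_mul _)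
    · rw [intervalIntegral.integral_const_mul] at hb
      calc |∫ s in (0:ℝ)..δ, (u (x + s) - 2 * u x + u (x - s)
              - s ^ 2 * iteratedDeriv 2 u x) * γ s|
          ≤ |M / 12 * ∫ s in (0:ℝ)..δ, s ^ 4 * γ s| :=
            le_trans (le_of_eq (Real.norm_eq_abs _).symm) (hb.trans (le_abs_self _))
        _ = M / 12 * ∫ s in (0:ℝ)..δ, s ^ 4 * γ s := by
            rw [abs_of_nonneg (by positivity)]
    · rw [← ae_restrict_iff' measurableSet_Ioc]
      filter_upwards [ae_restrict_mem measurableSet_Ioc, ae_restrict_of_ae hne] with s hs hsne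
      have hγs : 0 ≤ γ s := hγpos s ⟨by linarith [hs.1], lt_of_le_of_ne hs.2 hsne⟩
      rw [Real.norm_eq_abs, abs_mul, ← mul_assoc]
      calc |u (x + s) - 2 * u x + u (x - s) - s ^ 2 * iteratedDeriv 2 u x| * |γ s|
          ≤ M / 12 * s ^ 4 * |γ s| :=
            mul_le_mul_of_nonneg_right (htay s hs.1.le) (abs_nonneg _)
        _ = M / 12 * s ^ 4 * γ s := by rw [abs_of_nonneg hγs]
  -- final assembly
  rw [hsplit, hI2, hI4]
  have habs : |(-2) * (iteratedDeriv 2 u x * (1 / 2)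
      + ∫ s in (0:ℝ)..δ, (u (x + s) - 2 * u x + u (x - s)
          - s ^ 2 * iteratedDeriv 2 u x) * γ s) + iteratedDeriv 2 u x|
      = 2 * |∫ s in (0:ℝ)..δ, (u (x + s) - 2 * u x + u (x - s)
          - s ^ 2 * iteratedDeriv 2 u x) * γ s| := by
    rw [show (-2) * (iteratedDeriv 2 u x * (1 / 2)
      + ∫ s in (0:ℝ)..δ, (u (x + s) - 2 * u x + u (x - s)
          - s ^ 2 * iteratedDeriv 2 u x) * γ s) + iteratedDeriv 2 u x
      = (-2) * ∫ s in (0:ℝ)..δ, (u (x + s) - 2 * u x + u (x - s)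
          - s ^ 2 * iteratedDeriv 2 u x) * γ s by ring]
    rw [abs_mul]
    norm_num
  rw [habs]
  calc 2 * |∫ s in (0:ℝ)..δ, (u (x + s) - 2 * u x + u (x - s)
        - s ^ 2 * iteratedDeriv 2 u x) * γ s|
      ≤ 2 * (M / 12 * ∫ s in (0:ℝ)..δ, s ^ 4 * γ s) := by linarith [hJ]
    _ = 1 / 12 * M * (2 * ∫ s in (0:ℝ)..δ, s ^ 4 * γ s) := by ring
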